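/- Let t ≥ 2 and let G be a K_{2,t+1}-free graph on n vertices. Then the number of copies of K_{t,t} in G (i.e., unordered pairs {V, W} of disjoint t-element vertex sets with all edges between V and W present) is at most n(n-1)/2. -/

import Mathlib

open Finset

open scoped Classical in
/-- If `{u,v} ⊆ P` and `(P, W)` is a copy of `K_{t,t}` in a `K_{2,t+1}`-free graph, then
`W` equals the set of common neighbors of `u` and `v`. -/
lemma common_nbrs_eq {V : Type*} [Fintype V] [DecidableEq V] (t : ℕ)
    (G : SimpleGraph V)
    (hfree : ¬ ∃ A B : Finset V, Disjoint A B ∧ A.card = 2 ∧ B.card = t + 1 ∧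
      ∀ a ∈ A, ∀ b ∈ B, G.Adj a b)
    {u v : V} (huv : u ≠ v) {P W : Finset V}
    (hW : W.card = t) (hadj : ∀ a ∈ P, ∀ b ∈ W, G.Adj a b)
    (hu : u ∈ P) (hv : v ∈ P) :
    W = univ.filter (fun w => G.Adj u w ∧ G.Adj v w) := by
  set C := univ.filter (fun w => G.Adj u w ∧ G.Adj v w) with hC
  have hWC : W ⊆ C := fun b hb => by
    simp only [hC, mem_filter, mem_univ, true_and]
    exact ⟨hadj u hu b hb, hadj v hv b hb⟩
  have hCt : C.card ≤ t := by
    by_contra hlt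
    push_neg at hlt
    obtain ⟨B, hBC, hB⟩ := Finset.exists_subset_card_eq (s := C) (n := t + 1) hlt
    apply hfree
    refine ⟨{u, v}, B, ?_, Finset.card_pair huv, hB, ?_⟩
    · rw [Finset.disjoint_left]
      intro a ha haB
      have h2 := hBC haB
      simp only [hC, mem_filter] at h2
      rcases Finset.mem_insert.1 ha with rfl | ha
      · exact G.loopless.irrefl a h2.2.1
      · obtain rfl := Finset.mem_singleton.1 ha
        exact G.loopless.irrefl _ h2.2.2
    · intro a ha b hb
      have h2 := hBC hb
      simp only [hC, mem_filter] at h2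
      rcases Finset.mem_insert.1 ha with rfl | ha
      · exact h2.2.1
      · obtain rfl := Finset.mem_singleton.1 ha
        exact h2.2.2
  exact Finset.eq_of_subset_of_card_le hWC (by omega)

open scoped Classical in
/-- A `K_{2,t+1}`-free graph on `n` vertices has at most `n(n-1)/2` copies of
`K_{t,t}` (unordered pairs of disjoint `t`-sets with all cross edges present). -/
theorem stmt_1 {V : Type*} [Fintype V] [DecidableEq V] (t : ℕ) (ht : 2 ≤ t)
    (G : SimpleGraph V)
    (hfree : ¬ ∃ A B : Finset V, Disjoint A B ∧ A.card = 2 ∧ B.card = t + 1 ∧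
      ∀ a ∈ A, ∀ b ∈ B, G.Adj a b) :
    (Finset.univ.filter (fun x : Sym2 (Finset V) =>
      ∃ P W : Finset V, x = s(P, W) ∧ Disjoint P W ∧ P.card = t ∧ W.card = t ∧
        ∀ a ∈ P, ∀ b ∈ W, G.Adj a b)).card
      ≤ Fintype.card V * (Fintype.card V - 1) / 2 := by
  set Cond : Sym2 (Finset V) → Prop := fun x =>
    ∃ P W : Finset V, x = s(P, W) ∧ Disjoint P W ∧ P.card = t ∧ W.card = t ∧
      ∀ a ∈ P, ∀ b ∈ W, G.Adj a b with hCond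
  -- the map sending a copy to a 2-subset of (a chosen) side
  let f : Sym2 (Finset V) → Finset V := fun x =>
    if h : Cond x then
      (Finset.exists_subset_card_eq (s := h.choose) (n := 2)
        (ht.trans_eq h.choose_spec.choose_spec.2.2.1.symm)).choose
    else ∅
  have key : ∀ x, (h : Cond x) → f x ⊆ h.choose ∧ (f x).card = 2 := by
    intro x h
    have := (Finset.exists_subset_card_eq (s := h.choose) (n := 2)
        (ht.trans_eq h.choose_spec.choose_spec.2.2.1.symm)).choose_spec
    simpa only [f, dif_pos h] using this
  have hmaps : ∀ x ∈ Finset.univ.filter Cond, f x ∈ Finset.univ.powersetCard 2 := by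
    intro x hx
    rw [mem_filter] at hx
    rw [Finset.mem_powersetCard]
    exact ⟨Finset.subset_univ _, (key x hx.2).2⟩
  have hinj : Set.InjOn f (Finset.univ.filter Cond) := by
    intro x hx y hy hfxy
    rw [Finset.coe_filter] at hx hy
    have hxc : Cond x := hx.2
    have hyc : Cond y := hy.2
    obtain ⟨hsx, hsx2⟩ := key x hxc
    obtain ⟨hsy, _⟩ := key y hyc
    rw [hfxy] at hsx hsx2
    -- unpack the chosen decompositions
    obtain ⟨hx1, hxd, hxP, hxW, hxadj⟩ := hxc.choose_spec.choose_spec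
    obtain ⟨hy1, hyd, hyP, hyW, hyadj⟩ := hyc.choose_spec.choose_spec
    set Px := hxc.choose
    set Wx := hxc.choose_spec.choose
    set Py := hyc.choose
    set Wy := hyc.choose_spec.choose
    obtain ⟨u, v, huv, hs⟩ := Finset.card_eq_two.1 hsx2
    rw [hs] at hsx hsy
    have huPx : u ∈ Px := hsx (by simp)
    have hvPx : v ∈ Px := hsx (by simp)
    have huPy : u ∈ Py := hsy (by simp)
    have hvPy : v ∈ Py := hsy (by simp)
    have hWeq : Wx = Wy := by
      rw [common_nbrs_eq t G hfree huv hxW hxadj huPx hvPx,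
        common_nbrs_eq t G hfree huv hyW hyadj huPy hvPy]
    obtain ⟨w1, hw1, w2, hw2, hw⟩ := Finset.one_lt_card.1 (by omega : 1 < Wx.card)
    have hxadj' : ∀ a ∈ Wx, ∀ b ∈ Px, G.Adj a b := fun a ha b hb => (hxadj b hb a ha).symm
    have hyadj' : ∀ a ∈ Wy, ∀ b ∈ Py, G.Adj a b := fun a ha b hb => (hyadj b hb a ha).symm
    have hPeq : Px = Py := by
      rw [common_nbrs_eq t G hfree hw hxP hxadj' hw1 hw2,
        common_nbrs_eq t G hfree hw hyP hyadj' (hWeq ▸ hw1) (hWeq ▸ hw2)]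
    rw [hx1, hy1]
    exact (show s(Px, Wx) = s(Py, Wy) by rw [hPeq, hWeq])
  calc (Finset.univ.filter Cond).card
      ≤ (Finset.univ.powersetCard 2 : Finset (Finset V)).card :=
        Finset.card_le_card_of_injOn f hmaps hinj
    _ = (Fintype.card V).choose 2 := by
        rw [Finset.card_powersetCard, Finset.card_univ]
    _ = Fintype.card V * (Fintype.card V - 1) / 2 := Nat.choose_two_right _
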